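/- Fix n ≥ 1, offsets c_0,…,c_{n−1} ∈ ℤ pairwise incongruent mod n, and skew shapes λ^(0)/μ^(0),…,λ^(n−1)/μ^(n−1), each a horizontal strip (at most one cell in every column), with at least one cell in total. Then: (i) the diagonals of the cells of the n-tuple of shapes are pairwise distinct; (ii) letting d_1 < d_2 < ⋯ < d_m enumerate the integers from the smallest to the largest occurring diagonal, the map sending an n-tuple T of semistandard skew tableaux of these shapes with entries in {1,2} to the sequence (a_1,…,a_m), where a_i is the entry of the cell with diagonal d_i if such a cell exists and a_i = ∅ otherwise, is a bijection from such n-tuples onto the set of (1,2,∅)-words of length m whose form is F = {i : no cell has diagonal d_i}; moreover under this bijection the number of cells of T with entry j equals μ_j for j = 1, 2, and inv(T) = linv_n(a). -/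
import Mathlib


open Finset MvPolynomial

attribute [local instance] Classical.propDecidable

noncomputable section

/-- A skew shape `λ/μ`: a pair of Young diagrams with `μ ⊆ λ`. -/
structure SkewShape where
  outer : YoungDiagram
  inner : YoungDiagram
  le : inner ≤ outer

/-- The cells of a skew shape: cells of `λ` not in `μ`. -/
def SkewShape.cells (sh : SkewShape) : Finset (ℕ × ℕ) :=
  sh.outer.cells \ sh.inner.cells

/-- A horizontal strip has at most one cell in every column. -/
def SkewShape.IsHorizontalStrip (sh : SkewShape) : Prop :=
  ∀ i₁ i₂ j : ℕ, (i₁, j) ∈ sh.cells → (i₂, j) ∈ sh.cells → i₁ = i₂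

variable {n : ℕ}

/-- The cells of an `n`-tuple of skew shapes, tagged by component. -/
def allCells (sh : Fin n → SkewShape) : Finset (Fin n × ℕ × ℕ) :=
  Finset.univ.biUnion fun k =>
    (sh k).cells.map ⟨fun s => (k, s), fun _ _ h => congrArg Prod.snd h⟩

/-- The diagonal of a cell in row `i`, column `j` of component `k` is `n(j-i) + c k`. -/
def diag (c : Fin n → ℤ) (p : Fin n × ℕ × ℕ) : ℤ :=
  (n : ℤ) * ((p.2.2 : ℤ) - (p.2.1 : ℤ)) + c p.1

/-- `f` is a semistandard filling of the tuple of skew shapes: entries are positive on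
cells and zero elsewhere, rows weakly increase and columns strictly increase. -/
def IsSSYT (sh : Fin n → SkewShape) (f : Fin n × ℕ × ℕ → ℕ) : Prop :=
  (∀ p ∈ allCells sh, 1 ≤ f p) ∧
  (∀ p, p ∉ allCells sh → f p = 0) ∧
  (∀ (k : Fin n) (i j₁ j₂ : ℕ), j₁ ≤ j₂ → (k, i, j₁) ∈ allCells sh →
      (k, i, j₂) ∈ allCells sh → f (k, i, j₁) ≤ f (k, i, j₂)) ∧
  (∀ (k : Fin n) (i₁ i₂ j : ℕ), i₁ < i₂ → (k, i₁, j) ∈ allCells sh →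
      (k, i₂, j) ∈ allCells sh → f (k, i₁, j) < f (k, i₂, j))

/-- The finset of semistandard fillings of the tuple of shapes with entries in `{1,…,m}`. -/
def Tabs (sh : Fin n → SkewShape) (m : ℕ) : Finset (Fin n × ℕ × ℕ → ℕ) :=
  (((allCells sh).pi fun _ => Finset.Icc 1 m).image
      fun g p => if h : p ∈ allCells sh then g p h else 0).filter (IsSSYT sh)

/-- The number of inversions of a filling: pairs of cells `x, y` with
`f x < f y` and `0 < diag x - diag y < n`. -/
def inv (sh : Fin n → SkewShape) (c : Fin n → ℤ) (f : Fin n × ℕ × ℕ → ℕ) : ℕ :=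
  ((allCells sh ×ˢ allCells sh).filter fun pq =>
    f pq.1 < f pq.2 ∧ 0 < diag c pq.1 - diag c pq.2 ∧ diag c pq.1 - diag c pq.2 < n).card

/-- The number of cells with entry `i`. -/
def wt (sh : Fin n → SkewShape) (f : Fin n × ℕ × ℕ → ℕ) (i : ℕ) : ℕ :=
  ((allCells sh).filter fun p => f p = i).card

/-- The inversion generating function `Σ_T q^{inv T} x^T` in `ℤ[q][x₁,…,x_m]`. -/
def G (sh : Fin n → SkewShape) (c : Fin n → ℤ) (m : ℕ) :
    MvPolynomial (Fin m) (Polynomial ℤ) :=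
  ∑ f ∈ Tabs sh m, MvPolynomial.C (Polynomial.X ^ inv sh c f) *
    ∏ i : Fin m, MvPolynomial.X i ^ wt sh f ((i : ℕ) + 1)

/-- A `(1,2,∅)`-word of length `m`, where the letter `∅` is encoded by `0`:
all letters lie in `{0,1,2}` and a `2` in position `i` forbids a `1` in position `i + n`. -/
def IsWord (n m : ℕ) (a : Fin m → ℕ) : Prop :=
  (∀ i, a i ≤ 2) ∧ ∀ i j : Fin m, (j : ℕ) = (i : ℕ) + n → a i = 2 → a j ≠ 1

/-- The form of a word: the set of positions holding the letter `∅` (encoded `0`). -/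
def form (m : ℕ) (a : Fin m → ℕ) : Finset (Fin m) :=
  Finset.univ.filter fun i => a i = 0

/-- The number of `n`-local inversions: pairs `i < j` with `j - i < n`, `a i = 2`,
`a j = 1`. -/
def linv (n m : ℕ) (a : Fin m → ℕ) : ℕ :=
  ((Finset.univ ×ˢ Finset.univ : Finset (Fin m × Fin m)).filter fun p =>
    (p.1 : ℕ) < (p.2 : ℕ) ∧ (p.2 : ℕ) - (p.1 : ℕ) < n ∧ a p.1 = 2 ∧ a p.2 = 1).card

/-- The `(1,2,∅)`-words of length `m` with form `F` and weight `(μ₁, μ₂)`. -/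
noncomputable def words (n m : ℕ) (F : Finset (Fin m)) (μ₁ μ₂ : ℕ) :
    Finset (Fin m → ℕ) :=
  (Fintype.piFinset fun _ : Fin m => ({0, 1, 2} : Finset ℕ)).filter fun a =>
    IsWord n m a ∧ form m a = F ∧
    (Finset.univ.filter fun i => a i = 1).card = μ₁ ∧
    (Finset.univ.filter fun i => a i = 2).card = μ₂

/-- The `(1,2,∅)`-word of a filling `f`, with respect to the list of diagonals
`dmin, dmin + 1, …`: position `i` holds the entry of the unique cell with diagonal
`dmin + i` if there is one, and `∅` (encoded `0`) otherwise.  (The sum below has at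
most one term when all diagonals are distinct.) -/
def wordOf (sh : Fin n → SkewShape) (c : Fin n → ℤ) (dmin : ℤ) (m : ℕ)
    (f : Fin n × ℕ × ℕ → ℕ) : Fin m → ℕ :=
  fun i => ∑ p ∈ (allCells sh).filter fun p => diag c p = dmin + (i : ℕ), f p


section Aux

variable {n : ℕ} {sh : Fin n → SkewShape} {c : Fin n → ℤ}

lemma mem_allCells {k : Fin n} {i j : ℕ} :
    (k, i, j) ∈ allCells sh ↔ (i, j) ∈ (sh k).cells := by
  simp [allCells, Finset.mem_biUnion, Prod.ext_iff]
  constructor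
  · rintro ⟨l, x, y, hxy, rfl, rfl, rfl⟩; exact hxy
  · intro h; exact ⟨k, i, j, h, rfl, rfl, rfl⟩

lemma strip_aux (hstrip : ∀ k, (sh k).IsHorizontalStrip) {k : Fin n} {i₁ j₁ i₂ j₂ : ℕ}
    (h1 : (i₁, j₁) ∈ (sh k).cells) (h2 : (i₂, j₂) ∈ (sh k).cells)
    (hij : i₁ < i₂) : j₂ < j₁ := by
  by_contra hcon
  push_neg at hcon
  obtain ⟨h2o, _⟩ := Finset.mem_sdiff.mp h2
  obtain ⟨_, h1i⟩ := Finset.mem_sdiff.mp h1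
  have houter : (i₁ + 1, j₁) ∈ (sh k).outer.cells := by
    rw [YoungDiagram.mem_cells] at h2o ⊢
    exact (sh k).outer.up_left_mem (by omega) hcon h2o
  have hinner : (i₁ + 1, j₁) ∉ (sh k).inner.cells := by
    intro hin
    rw [YoungDiagram.mem_cells] at hin
    exact h1i ((YoungDiagram.mem_cells _).mpr
      ((sh k).inner.up_left_mem (Nat.le_succ i₁) le_rfl hin))
  have := hstrip k i₁ (i₁ + 1) j₁ h1 (Finset.mem_sdiff.mpr ⟨houter, hinner⟩)
  omega

lemma contig (h1 : (k, i, j₁) ∈ allCells sh) (h2 : (k, i, j₂) ∈ allCells sh)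
    {j : ℕ} (hj1 : j₁ ≤ j) (hj2 : j ≤ j₂) : (k, i, j) ∈ allCells sh := by
  rw [mem_allCells] at h1 h2 ⊢
  obtain ⟨h2o, _⟩ := Finset.mem_sdiff.mp h2
  obtain ⟨_, h1i⟩ := Finset.mem_sdiff.mp h1
  refine Finset.mem_sdiff.mpr ⟨?_, ?_⟩
  · rw [YoungDiagram.mem_cells] at h2o ⊢
    exact (sh k).outer.up_left_mem le_rfl hj2 h2o
  · intro hin
    rw [YoungDiagram.mem_cells] at hin
    exact h1i ((YoungDiagram.mem_cells _).mpr
      ((sh k).inner.up_left_mem le_rfl hj1 hin))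

lemma diag_mod (p : Fin n × ℕ × ℕ) : diag c p % n = c p.1 % n := by
  simp only [_root_.diag]
  rw [Int.add_comm, Int.add_mul_emod_self_left]

lemma diag_step (hn : 1 ≤ n)
    (hc : ∀ k l : Fin n, k ≠ l → c k % (n : ℤ) ≠ c l % (n : ℤ))
    (hstrip : ∀ k, (sh k).IsHorizontalStrip) {p q : Fin n × ℕ × ℕ}
    (hp : p ∈ allCells sh) (hq : q ∈ allCells sh)
    {t : ℤ} (ht0 : 0 ≤ t) (ht1 : t ≤ 1) (h : diag c q = diag c p + (n : ℤ) * t) :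
    q.1 = p.1 ∧ q.2.1 = p.2.1 ∧ (q.2.2 : ℤ) = (p.2.2 : ℤ) + t := by
  obtain ⟨k, i₁, j₁⟩ := p
  obtain ⟨l, i₂, j₂⟩ := q
  have hkl : l = k := by
    by_contra hne
    apply hc l k hne
    rw [← diag_mod (c := c) (l, i₂, j₂), ← diag_mod (c := c) (k, i₁, j₁), h]
    rw [Int.add_mul_emod_self_left]
  subst hkl
  simp only [_root_.diag] at h
  have hnz : (n : ℤ) ≠ 0 := by positivity
  have hcontent : (j₂ : ℤ) - (i₂ : ℤ) = (j₁ : ℤ) - (i₁ : ℤ) + t := by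
    have : (n : ℤ) * ((j₂ : ℤ) - (i₂ : ℤ)) = (n : ℤ) * ((j₁ : ℤ) - (i₁ : ℤ) + t) := by
      ring_nf
      ring_nf at h
      omega
    exact mul_left_cancel₀ hnz this
  rw [mem_allCells] at hp hq
  rcases lt_trichotomy i₁ i₂ with hlt | heq | hgt
  · have := strip_aux hstrip hp hq hlt
    omega
  · subst heq
    refine ⟨rfl, rfl, ?_⟩
    show (j₂ : ℤ) = (j₁ : ℤ) + t
    omega
  · have := strip_aux hstrip hq hp hgt
    omega

lemma diag_injOn (hn : 1 ≤ n)
    (hc : ∀ k l : Fin n, k ≠ l → c k % (n : ℤ) ≠ c l % (n : ℤ))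
    (hstrip : ∀ k, (sh k).IsHorizontalStrip) :
    ∀ p ∈ allCells sh, ∀ q ∈ allCells sh, diag c p = diag c q → p = q := by
  intro p hp q hq h
  obtain ⟨h1, h2, h3⟩ := diag_step hn hc hstrip hp hq (t := 0) le_rfl zero_le_one
    (by rw [mul_zero, add_zero, h])
  obtain ⟨k, i₁, j₁⟩ := p
  obtain ⟨l, i₂, j₂⟩ := q
  simp only at h1 h2 h3
  simp only [Prod.mk.injEq]
  exact ⟨h1.symm, h2.symm, by omega⟩

lemma mem_Tabs_iff {m : ℕ} {f : Fin n × ℕ × ℕ → ℕ} :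
    f ∈ Tabs sh m ↔ IsSSYT sh f ∧ ∀ p ∈ allCells sh, f p ≤ m := by
  unfold Tabs
  rw [Finset.mem_filter, Finset.mem_image]
  constructor
  · rintro ⟨⟨g, hg, rfl⟩, hs⟩
    refine ⟨hs, fun p hp => ?_⟩
    simp only [dif_pos hp]
    exact (Finset.mem_Icc.mp (Finset.mem_pi.mp hg p hp)).2
  · rintro ⟨hs, hb⟩
    refine ⟨⟨fun p _ => f p, ?_, ?_⟩, hs⟩
    · rw [Finset.mem_pi]
      intro p hp
      exact Finset.mem_Icc.mpr ⟨hs.1 p hp, hb p hp⟩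
    · funext p
      split_ifs with h
      · rfl
      · exact (hs.2.1 p h).symm

end Aux
/-- for a nonempty `n`-tuple of horizontal strips, (i) the diagonals of the
cells are pairwise distinct, and (ii) with `d_1 < ⋯ < d_m` the integers from the smallest
to the largest occurring diagonal, `T ↦ wordOf T` is a bijection from semistandard
fillings with entries in `{1,2}` onto the `(1,2,∅)`-words of length `m` whose form is
the set of positions whose diagonal is taken by no cell; moreover it transforms the
numbers of entries `1` and `2` into the weight of the word, and `inv` into `linv`. -/
theorem stmt10 (n : ℕ) (hn : 1 ≤ n) (c : Fin n → ℤ)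
    (hc : ∀ k l : Fin n, k ≠ l → c k % (n : ℤ) ≠ c l % (n : ℤ))
    (sh : Fin n → SkewShape) (hstrip : ∀ k, (sh k).IsHorizontalStrip)
    (hne : (allCells sh).Nonempty)
    (dmin dmax : ℤ)
    (hdmin : dmin = (((allCells sh).image (diag c)).min' (hne.image _)))
    (hdmax : dmax = (((allCells sh).image (diag c)).max' (hne.image _)))
    (m : ℕ) (hm : (m : ℤ) = dmax - dmin + 1) :
    (∀ p ∈ allCells sh, ∀ q ∈ allCells sh, diag c p = diag c q → p = q) ∧
    Set.BijOn (wordOf sh c dmin m) ↑(Tabs sh 2)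
      {a : Fin m → ℕ | IsWord n m a ∧
        form m a = Finset.univ.filter fun i : Fin m =>
          ∀ p ∈ allCells sh, diag c p ≠ dmin + (i : ℕ)} ∧
    ∀ f ∈ Tabs sh 2,
      wt sh f 1 = (Finset.univ.filter fun i => wordOf sh c dmin m f i = 1).card ∧
      wt sh f 2 = (Finset.univ.filter fun i => wordOf sh c dmin m f i = 2).card ∧
      inv sh c f = linv n m (wordOf sh c dmin m f) := by
  have hinj := diag_injOn hn hc hstrip
  have hdlb : ∀ p ∈ allCells sh, dmin ≤ diag c p := by
    intro p hp
    rw [hdmin]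
    exact Finset.min'_le _ _ (Finset.mem_image_of_mem _ hp)
  have hdub : ∀ p ∈ allCells sh, diag c p ≤ dmax := by
    intro p hp
    rw [hdmax]
    exact Finset.le_max' _ _ (Finset.mem_image_of_mem _ hp)
  have hm1 : 1 ≤ m := by
    obtain ⟨p₀, hp₀⟩ := hne
    have := hdlb p₀ hp₀
    have := hdub p₀ hp₀
    omega
  obtain ⟨idx, hidxA⟩ : ∃ idx : (Fin n × ℕ × ℕ) → Fin m,
      ∀ p ∈ allCells sh, diag c p = dmin + ((idx p : ℕ) : ℤ) := by
    refine ⟨fun p => ⟨min (diag c p - dmin).toNat (m - 1), by omega⟩, fun p hp => ?_⟩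
    have h1 := hdlb p hp
    have h2 := hdub p hp
    show diag c p = dmin + ((min (diag c p - dmin).toNat (m - 1) : ℕ) : ℤ)
    omega
  have hidx_inj : ∀ p ∈ allCells sh, ∀ q ∈ allCells sh, idx p = idx q → p = q :=
    fun p hp q hq h => hinj p hp q hq (by rw [hidxA p hp, hidxA q hq, h])
  have hidx_eq : ∀ p ∈ allCells sh, ∀ i : Fin m, diag c p = dmin + (i : ℕ) → idx p = i := by
    intro p hp i hi
    have := hidxA p hp
    exact Fin.ext (by omega)
  have hword_cell : ∀ (f : Fin n × ℕ × ℕ → ℕ), ∀ p ∈ allCells sh, ∀ i : Fin m,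
      diag c p = dmin + (i : ℕ) → wordOf sh c dmin m f i = f p := by
    intro f p hp i hi
    have hset : (allCells sh).filter (fun q => diag c q = dmin + (i : ℕ)) = {p} := by
      apply Finset.eq_singleton_iff_unique_mem.mpr
      refine ⟨Finset.mem_filter.mpr ⟨hp, hi⟩, fun q hq => ?_⟩
      obtain ⟨hqA, hqd⟩ := Finset.mem_filter.mp hq
      exact hinj q hqA p hp (hqd.trans hi.symm)
    simp only [wordOf]
    rw [hset, Finset.sum_singleton]
  have hword_none : ∀ (f : Fin n × ℕ × ℕ → ℕ) (i : Fin m),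
      (∀ p ∈ allCells sh, diag c p ≠ dmin + (i : ℕ)) → wordOf sh c dmin m f i = 0 := by
    intro f i h
    simp only [wordOf]
    rw [Finset.filter_false_of_mem h, Finset.sum_empty]
  have hword_idx : ∀ (f : Fin n × ℕ × ℕ → ℕ), ∀ p ∈ allCells sh,
      wordOf sh c dmin m f (idx p) = f p :=
    fun f p hp => hword_cell f p hp (idx p) (hidxA p hp)
  have hcellOf : ∀ (f : Fin n × ℕ × ℕ → ℕ) (i : Fin m), wordOf sh c dmin m f i ≠ 0 →
      ∃ p ∈ allCells sh, diag c p = dmin + (i : ℕ) := by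
    intro f i h
    by_contra hno
    push_neg at hno
    exact h (hword_none f i hno)
  have hval : ∀ f ∈ Tabs sh 2, ∀ p ∈ allCells sh, f p = 1 ∨ f p = 2 := by
    intro f hf p hp
    obtain ⟨hs, hb⟩ := mem_Tabs_iff.mp hf
    have := hs.1 p hp
    have := hb p hp
    omega
  refine ⟨hinj, ⟨?_, ?_, ?_⟩, ?_⟩
  · -- MapsTo
    intro f hf
    have hf' := mem_Tabs_iff.mp (Finset.mem_coe.mp hf)
    simp only [Set.mem_setOf_eq]
    refine ⟨⟨?_, ?_⟩, ?_⟩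
    · intro i
      by_cases hex : ∃ p ∈ allCells sh, diag c p = dmin + (i : ℕ)
      · obtain ⟨p, hp, hd⟩ := hex
        rw [hword_cell f p hp i hd]
        exact hf'.2 p hp
      · push_neg at hex
        rw [hword_none f i hex]
        omega
    · intro i j hji h2 h1
      obtain ⟨⟨k, r, jp⟩, hp, hdp⟩ := hcellOf f i (by rw [h2]; omega)
      obtain ⟨⟨k', r', jq⟩, hq, hdq⟩ := hcellOf f j (by rw [h1]; omega)
      have hd : diag c (k', r', jq) = diag c (k, r, jp) + (n : ℤ) * 1 := by
        rw [hdp, hdq, hji]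
        push_cast
        ring
      obtain ⟨hk, hi, hj⟩ := diag_step hn hc hstrip hp hq zero_le_one le_rfl hd
      simp only at hk hi hj
      rw [hk, hi] at hq hdq
      have hle := hf'.1.2.2.1 k r jp jq (by omega) hp hq
      rw [hword_cell f _ hp i hdp] at h2
      rw [hword_cell f _ hq j hdq] at h1
      omega
    · apply Finset.ext
      intro i
      simp only [form, Finset.mem_filter, Finset.mem_univ, true_and]
      constructor
      · intro h0 p hp hd
        rw [hword_cell f p hp i hd] at h0
        have := hf'.1.1 p hp
        omega
      · exact hword_none f i
  · -- InjOn
    intro f hf g hg hfg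
    funext p
    by_cases hp : p ∈ allCells sh
    · rw [← hword_idx f p hp, ← hword_idx g p hp, hfg]
    · rw [(mem_Tabs_iff.mp (Finset.mem_coe.mp hf)).1.2.1 p hp,
        (mem_Tabs_iff.mp (Finset.mem_coe.mp hg)).1.2.1 p hp]
  · -- SurjOn
    intro a ha
    obtain ⟨⟨ha2, hcomp⟩, hform⟩ := ha
    have haval : ∀ i : Fin m, a i = 0 ↔ ∀ p ∈ allCells sh, diag c p ≠ dmin + (i : ℕ) := by
      intro i
      have := Finset.ext_iff.mp hform i
      simpa [form] using this
    set f : Fin n × ℕ × ℕ → ℕ := fun p => if hp : p ∈ allCells sh then a (idx p) else 0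
      with hfdef
    have hfcell : ∀ p ∈ allCells sh, f p = a (idx p) := fun p hp => dif_pos hp
    have hfzero : ∀ p ∉ allCells sh, f p = 0 := fun p hp => dif_neg hp
    have hane : ∀ p ∈ allCells sh, a (idx p) ≠ 0 := by
      intro p hp h0
      exact ((haval (idx p)).mp h0) p hp (hidxA p hp)
    have hfpos : ∀ p ∈ allCells sh, 1 ≤ f p := by
      intro p hp
      rw [hfcell p hp]
      have := hane p hp
      omega
    have hstep : ∀ (k : Fin n) (r j : ℕ), (k, r, j) ∈ allCells sh →
        (k, r, j + 1) ∈ allCells sh → f (k, r, j) ≤ f (k, r, j + 1) := by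
      intro k r j h1 h2
      have hi2 : ((idx (k, r, j + 1) : ℕ) : ℤ) = ((idx (k, r, j) : ℕ) : ℤ) + n := by
        have e1 := hidxA _ h1
        have e2 := hidxA _ h2
        have hd : diag c (k, r, j + 1) = diag c (k, r, j) + n := by
          simp only [_root_.diag]
          push_cast
          ring
        omega
      rw [hfcell _ h1, hfcell _ h2]
      have hb1 := ha2 (idx (k, r, j))
      have hb2 := ha2 (idx (k, r, j + 1))
      have hn1 := hane _ h1
      have hn2 := hane _ h2
      by_cases h2a : a (idx (k, r, j)) = 2
      · have := hcomp (idx (k, r, j)) (idx (k, r, j + 1)) (by exact_mod_cast hi2) h2a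
        omega
      · omega
    have hrow : ∀ (k : Fin n) (r j₁ j₂ : ℕ), j₁ ≤ j₂ → (k, r, j₁) ∈ allCells sh →
        (k, r, j₂) ∈ allCells sh → f (k, r, j₁) ≤ f (k, r, j₂) := by
      intro k r j₁ j₂ hle h1
      induction j₂, hle using Nat.le_induction with
      | base => intro _; exact le_rfl
      | succ j₂ hj ih =>
        intro h2
        have hmid : (k, r, j₂) ∈ allCells sh := contig h1 h2 hj (Nat.le_succ j₂)
        exact le_trans (ih hmid) (hstep k r j₂ hmid h2)
    have hfT : f ∈ Tabs sh 2 := by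
      rw [mem_Tabs_iff]
      refine ⟨⟨hfpos, hfzero, hrow, ?_⟩, ?_⟩
      · intro k i₁ i₂ j hlt h1 h2
        exact absurd (hstrip k i₁ i₂ j (mem_allCells.mp h1) (mem_allCells.mp h2))
          (Nat.ne_of_lt hlt)
      · intro p hp
        rw [hfcell p hp]
        exact ha2 (idx p)
    refine ⟨f, hfT, ?_⟩
    funext i
    by_cases hex : ∃ p ∈ allCells sh, diag c p = dmin + (i : ℕ)
    · obtain ⟨p, hp, hd⟩ := hex
      rw [hword_cell f p hp i hd, hfcell p hp, hidx_eq p hp i hd]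
    · push_neg at hex
      rw [hword_none f i hex, ((haval i).mpr hex)]
  · -- counts
    intro f hfmem
    have hv := hval f hfmem
    have hcount : ∀ v : ℕ, 1 ≤ v →
        ((allCells sh).filter fun p => f p = v).card =
          (Finset.univ.filter fun i => wordOf sh c dmin m f i = v).card := by
      intro v hv1
      apply Finset.card_bij (fun p _ => idx p)
      · intro p hp
        obtain ⟨hpA, hpv⟩ := Finset.mem_filter.mp hp
        refine Finset.mem_filter.mpr ⟨Finset.mem_univ _, ?_⟩
        rw [hword_idx f p hpA, hpv]
      · intro p hp q hq h
        exact hidx_inj p (Finset.mem_filter.mp hp).1 q (Finset.mem_filter.mp hq).1 h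
      · intro i hi
        obtain ⟨_, hiv⟩ := Finset.mem_filter.mp hi
        obtain ⟨p, hpA, hd⟩ := hcellOf f i (by omega)
        refine ⟨p, Finset.mem_filter.mpr ⟨hpA, ?_⟩, hidx_eq p hpA i hd⟩
        rw [← hword_cell f p hpA i hd]
        exact hiv
    refine ⟨hcount 1 le_rfl, hcount 2 (by omega), ?_⟩
    unfold inv linv
    apply Finset.card_bij (fun pq _ => (idx pq.2, idx pq.1))
    · intro pq hpq
      obtain ⟨hmem, hflt, hd1, hd2⟩ := Finset.mem_filter.mp hpq
      obtain ⟨h1A, h2A⟩ := Finset.mem_product.mp hmem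
      have e1 := hidxA pq.1 h1A
      have e2 := hidxA pq.2 h2A
      have w1 := hword_idx f pq.1 h1A
      have w2 := hword_idx f pq.2 h2A
      have v1 := hv pq.1 h1A
      have v2 := hv pq.2 h2A
      refine Finset.mem_filter.mpr ⟨Finset.mem_product.mpr ⟨Finset.mem_univ _, Finset.mem_univ _⟩,
        ?_, ?_, ?_, ?_⟩
      · show ((idx pq.2 : ℕ)) < ((idx pq.1 : ℕ))
        omega
      · show ((idx pq.1 : ℕ)) - ((idx pq.2 : ℕ)) < n
        omega
      · show wordOf sh c dmin m f (idx pq.2) = 2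
        omega
      · show wordOf sh c dmin m f (idx pq.1) = 1
        omega
    · intro pq1 h1 pq2 h2 heq
      obtain ⟨hm1', _, _, _⟩ := Finset.mem_filter.mp h1
      obtain ⟨hm2', _, _, _⟩ := Finset.mem_filter.mp h2
      obtain ⟨h11, h12⟩ := Finset.mem_product.mp hm1'
      obtain ⟨h21, h22⟩ := Finset.mem_product.mp hm2'
      simp only [Prod.mk.injEq] at heq
      exact Prod.ext_iff.mpr ⟨hidx_inj _ h11 _ h21 heq.2, hidx_inj _ h12 _ h22 heq.1⟩
    · intro ij hij
      obtain ⟨_, hlt, hsub, h2, h1⟩ := Finset.mem_filter.mp hij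
      obtain ⟨q, hqA, hdq⟩ := hcellOf f ij.1 (by rw [h2]; omega)
      obtain ⟨p, hpA, hdp⟩ := hcellOf f ij.2 (by rw [h1]; omega)
      have vq : f q = 2 := (hword_cell f q hqA ij.1 hdq).symm.trans h2
      have vp : f p = 1 := (hword_cell f p hpA ij.2 hdp).symm.trans h1
      refine ⟨(p, q), Finset.mem_filter.mpr ⟨Finset.mem_product.mpr ⟨hpA, hqA⟩, ?_, ?_, ?_⟩, ?_⟩
      · show f p < f q
        omega
      · show 0 < diag c p - diag c q
        omega
      · show diag c p - diag c q < n
        omega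
      · show (idx q, idx p) = ij
        rw [hidx_eq q hqA ij.1 hdq, hidx_eq p hpA ij.2 hdp]
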